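/- Let p be an odd prime. In GL(3, ZMod p), the subgroup generated by the matrices ρ_v(0, 0) and ρ_f(0, 0) (the cube specialized to 𝔽_p; both matrices are invertible) is isomorphic to the symmetric group Equiv.Perm (Fin 4). -/
import Mathlib


open Matrix

/-- Grothendieck's universal rotation `ρ_v` about a vertex, with `x = cos θ`, `y = cos γ`. -/
def rhoV {R : Type*} [CommRing R] (x y : R) : Matrix (Fin 3) (Fin 3) R :=
  !![1, 1 - x, (1 - x) * (1 - y); 0, -1, -1 + y; 0, 1 + x, -1 + (1 + x) * (1 - y)]

/-- Grothendieck's universal rotation `ρ_f` about a face, with `x = cos θ`, `y = cos γ`. -/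
def rhoF {R : Type*} [CommRing R] (x y : R) : Matrix (Fin 3) (Fin 3) R :=
  !![-1, -1 + x, 0; 2, 1 - 2 * x, 0; 0, 1 + x, 1]

namespace CubeAux

open Equiv

/-- The sign-twisted standard representation of `S₄` over `ℤ`. -/
def NN (σ : Equiv.Perm (Fin 4)) : Matrix (Fin 3) (Fin 3) ℤ :=
  Matrix.of fun k i => (Equiv.Perm.sign σ : ℤ) *
    ((if σ i.castSucc = k.castSucc then 1 else 0) - (if σ 3 = k.castSucc then 1 else 0))

lemma NN_one : NN 1 = 1 := by decide

set_option maxHeartbeats 4000000 in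
lemma NN_mul : ∀ σ τ : Equiv.Perm (Fin 4), NN (σ * τ) = NN σ * NN τ := by decide

def Qmat : Matrix (Fin 3) (Fin 3) ℤ := !![1, 1, 0; 0, -1, 1; -1, -1, -2]
def Qadj : Matrix (Fin 3) (Fin 3) ℤ := !![3, 2, 1; -1, -2, -1; -1, 0, -1]
def Aint : Matrix (Fin 3) (Fin 3) ℤ := !![1, 1, 1; 0, -1, -1; 0, 1, 0]
def Bint : Matrix (Fin 3) (Fin 3) ℤ := !![-1, -1, 0; 2, 1, 0; 0, 1, 1]

def σa : Equiv.Perm (Fin 4) := Equiv.swap 1 2 * Equiv.swap 2 3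
def σb : Equiv.Perm (Fin 4) := Equiv.swap 0 1 * Equiv.swap 1 3 * Equiv.swap 3 2

lemma hQQ : Qmat * Qadj = 2 := by decide
lemma hQQ' : Qadj * Qmat = 2 := by decide
lemma hQA : Qmat * NN σa * Qadj = 2 * Aint := by decide
lemma hQB : Qmat * NN σb * Qadj = 2 * Bint := by decide

set_option maxHeartbeats 1000000 in
lemma NN_ne_one : ∀ σ : Equiv.Perm (Fin 4), σ ≠ 1 →
    ∃ i j, (NN σ i j - (1 : Matrix (Fin 3) (Fin 3) ℤ) i j).natAbs = 1 ∨
           (NN σ i j - (1 : Matrix (Fin 3) (Fin 3) ℤ) i j).natAbs = 2 := by decide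

lemma swap01 : Equiv.swap (0 : Fin 4) 1 = σb * σa := by decide
lemma swap02 : Equiv.swap (0 : Fin 4) 2 = σa * σb := by decide
lemma swap03 : Equiv.swap (0 : Fin 4) 3 = σa * σb⁻¹ * σa := by decide
lemma swap12 : Equiv.swap (1 : Fin 4) 2 = σb * σa⁻¹ * σb * σb * σa := by decide
lemma swap13 : Equiv.swap (1 : Fin 4) 3 = σb * σa⁻¹ * σb * σb := by decide
lemma swap23 : Equiv.swap (2 : Fin 4) 3 = σb⁻¹ * σa * σb * σb := by decide

lemma gen_top : Subgroup.closure ({σa, σb} : Set (Equiv.Perm (Fin 4))) = ⊤ := by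
  have ha : σa ∈ Subgroup.closure ({σa, σb} : Set (Equiv.Perm (Fin 4))) :=
    Subgroup.subset_closure (Set.mem_insert _ _)
  have hb : σb ∈ Subgroup.closure ({σa, σb} : Set (Equiv.Perm (Fin 4))) :=
    Subgroup.subset_closure (Set.mem_insert_of_mem _ rfl)
  rw [eq_top_iff, ← Equiv.Perm.closure_isSwap, Subgroup.closure_le]
  rintro τ ⟨x, y, hxy, rfl⟩
  have key : ∀ u v : Fin 4, u < v → Equiv.swap u v ∈
      Subgroup.closure ({σa, σb} : Set (Equiv.Perm (Fin 4))) := by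
    intro u v huv
    fin_cases u <;> fin_cases v <;> simp_all <;>
      [ (rw [swap01]; exact mul_mem hb ha);
        (rw [swap02]; exact mul_mem ha hb);
        (rw [swap03]; exact mul_mem (mul_mem ha (inv_mem hb)) ha);
        (rw [swap12]; exact mul_mem (mul_mem (mul_mem (mul_mem hb (inv_mem ha)) hb) hb) ha);
        (rw [swap13]; exact mul_mem (mul_mem (mul_mem hb (inv_mem ha)) hb) hb);
        (rw [swap23]; exact mul_mem (mul_mem (mul_mem (inv_mem hb) ha) hb) hb) ]
  rcases lt_trichotomy x y with h | h | h
  · exact key x y h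
  · exact absurd h hxy
  · rw [Equiv.swap_comm]; exact key y x h

section ModP

variable (p : ℕ) [Fact p.Prime]

/-- Reduction mod `p` of matrices. -/
noncomputable def f : Matrix (Fin 3) (Fin 3) ℤ →+* Matrix (Fin 3) (Fin 3) (ZMod p) :=
  (Int.castRingHom (ZMod p)).mapMatrix

/-- The representation of `S₄` in the units of the matrix ring over `ZMod p`. -/
noncomputable def ψ : Equiv.Perm (Fin 4) →* (Matrix (Fin 3) (Fin 3) (ZMod p))ˣ where
  toFun σ :=
    { val := f p (NN σ)
      inv := f p (NN σ⁻¹)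
      val_inv := by rw [← _root_.map_mul, ← NN_mul, mul_inv_cancel, NN_one, _root_.map_one]
      inv_val := by rw [← _root_.map_mul, ← NN_mul, inv_mul_cancel, NN_one, _root_.map_one] }
  map_one' := Units.ext (by simp [NN_one])
  map_mul' σ τ := Units.ext (by simp [NN_mul])

lemma half_smul (t : ZMod p) (ht : t * 2 = 1) (M : Matrix (Fin 3) (Fin 3) (ZMod p)) :
    t • ((2 : Matrix (Fin 3) (Fin 3) (ZMod p)) * M) = M := by
  rw [two_mul, smul_add, ← add_smul, ← mul_two, ht, one_smul]

variable (ht : ((2 : ZMod p)⁻¹) * 2 = 1)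

/-- The conjugating matrix as a unit. -/
noncomputable def Qu (ht : ((2 : ZMod p)⁻¹) * 2 = 1) : (Matrix (Fin 3) (Fin 3) (ZMod p))ˣ where
  val := f p Qmat
  inv := (2 : ZMod p)⁻¹ • f p Qadj
  val_inv := by
    rw [mul_smul_comm, ← _root_.map_mul, hQQ, map_ofNat, ← mul_one (2 : Matrix (Fin 3) (Fin 3) (ZMod p)),
      half_smul p _ ht]
  inv_val := by
    rw [smul_mul_assoc, ← _root_.map_mul, hQQ', map_ofNat, ← mul_one (2 : Matrix (Fin 3) (Fin 3) (ZMod p)),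
      half_smul p _ ht]

/-- The conjugated representation, landing in the same basis as `rhoV 0 0`, `rhoF 0 0`. -/
noncomputable def φ (ht : ((2 : ZMod p)⁻¹) * 2 = 1) :
    Equiv.Perm (Fin 4) →* (Matrix (Fin 3) (Fin 3) (ZMod p))ˣ :=
  (MulAut.conj (Qu p ht)).toMonoidHom.comp (ψ p)

lemma φ_val (σ : Equiv.Perm (Fin 4)) :
    (φ p ht σ : Matrix (Fin 3) (Fin 3) (ZMod p)) =
      (2 : ZMod p)⁻¹ • f p (Qmat * NN σ * Qadj) := by
  show (Qu p ht).val * (ψ p σ).val * (Qu p ht)⁻¹.val = _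
  have : ((Qu p ht)⁻¹).val = (Qu p ht).inv := rfl
  rw [this]
  show f p Qmat * f p (NN σ) * ((2 : ZMod p)⁻¹ • f p Qadj) = _
  rw [mul_smul_comm, ← _root_.map_mul, ← _root_.map_mul]

lemma φ_σa : (φ p ht σa : Matrix (Fin 3) (Fin 3) (ZMod p)) = f p Aint := by
  rw [φ_val, hQA, _root_.map_mul, map_ofNat, half_smul p _ ht]

lemma φ_σb : (φ p ht σb : Matrix (Fin 3) (Fin 3) (ZMod p)) = f p Bint := by
  rw [φ_val, hQB, _root_.map_mul, map_ofNat, half_smul p _ ht]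

lemma φ_injective (hp2 : p ≠ 2) : Function.Injective (φ p ht) := by
  have hψ : Function.Injective (ψ p) := by
    rw [injective_iff_map_eq_one]
    intro σ hσ
    by_contra hne
    obtain ⟨i, j, hd⟩ := NN_ne_one σ hne
    have hval : f p (NN σ) = 1 := congrArg Units.val hσ
    have hcast : ((NN σ i j - (1 : Matrix (Fin 3) (Fin 3) ℤ) i j : ℤ) : ZMod p) = 0 := by
      have h1 : (f p (NN σ)) i j = (1 : Matrix (Fin 3) (Fin 3) (ZMod p)) i j := by rw [hval]
      have h2 : (((NN σ) i j : ℤ) : ZMod p) = (((1 : Matrix (Fin 3) (Fin 3) ℤ) i j : ℤ) : ZMod p) := by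
        refine h1.trans ?_
        by_cases hij : i = j <;> simp [Matrix.one_apply, hij]
      push_cast
      rw [h2]; ring
    rw [ZMod.intCast_zmod_eq_zero_iff_dvd] at hcast
    have hdvd : p ∣ (NN σ i j - (1 : Matrix (Fin 3) (Fin 3) ℤ) i j).natAbs := by
      rwa [Int.natCast_dvd] at hcast
    have hp := (Fact.out : p.Prime)
    rcases hd with h | h
    · rw [h] at hdvd; exact hp.one_lt.ne' (Nat.dvd_one.mp hdvd)
    · rw [h] at hdvd
      exact hp2 ((Nat.prime_dvd_prime_iff_eq hp Nat.prime_two).mp hdvd)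
  exact (MulAut.conj (Qu p ht)).injective.comp hψ

end ModP

end CubeAux

/-- The cube (`cos θ = 0`, `cos γ = 0`) specialized to `𝔽_p` for an odd prime `p` still
has automorphism group `S₄`. -/
theorem cube_mod_odd_p (p : ℕ) [Fact p.Prime] (hp2 : p ≠ 2)
    (A B : GL (Fin 3) (ZMod p))
    (hA : (A : Matrix (Fin 3) (Fin 3) (ZMod p)) = rhoV 0 0)
    (hB : (B : Matrix (Fin 3) (Fin 3) (ZMod p)) = rhoF 0 0) :
    Nonempty (Subgroup.closure {A, B} ≃* Equiv.Perm (Fin 4)) := by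
  classical
  have h2 : (2 : ZMod p) ≠ 0 := by
    intro h
    have : ((2 : ℕ) : ZMod p) = 0 := by exact_mod_cast h
    rw [ZMod.natCast_eq_zero_iff] at this
    exact hp2 ((Nat.prime_dvd_prime_iff_eq (Fact.out : p.Prime) Nat.prime_two).mp this)
  have ht : ((2 : ZMod p)⁻¹) * 2 = 1 := inv_mul_cancel₀ h2
  -- identify the generators with the images of σa, σb
  have hAeq : CubeAux.φ p ht CubeAux.σa = A := by
    apply Units.ext
    rw [CubeAux.φ_σa]
    show (CubeAux.Aint.map (Int.cast)) = (A : Matrix (Fin 3) (Fin 3) (ZMod p))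
    rw [hA]
    ext i j
    fin_cases i <;> fin_cases j <;>
      simp [CubeAux.Aint, rhoV, Matrix.map_apply, Matrix.vecHead, Matrix.vecTail] <;> norm_num
  have hBeq : CubeAux.φ p ht CubeAux.σb = B := by
    apply Units.ext
    rw [CubeAux.φ_σb]
    show (CubeAux.Bint.map (Int.cast)) = (B : Matrix (Fin 3) (Fin 3) (ZMod p))
    rw [hB]
    ext i j
    fin_cases i <;> fin_cases j <;>
      simp [CubeAux.Bint, rhoF, Matrix.map_apply, Matrix.vecHead, Matrix.vecTail] <;> norm_num
  have hinj := CubeAux.φ_injective p ht hp2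
  have hrange : (CubeAux.φ p ht).range = Subgroup.closure {A, B} := by
    rw [MonoidHom.range_eq_map, ← CubeAux.gen_top, MonoidHom.map_closure]
    congr 1
    rw [Set.image_insert_eq, Set.image_singleton, hAeq, hBeq]
  exact ⟨(MulEquiv.subgroupCongr hrange.symm).trans (MonoidHom.ofInjective hinj).symm⟩
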